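/- Let (U,≤) be the universal homogeneous countable past-finite causal set and z ∈ U. Then the proper future {u ∈ U : z < u}, with the induced order, is order-isomorphic to (U,≤). -/

import Mathlib

/-- A stem (downward closed subset) of a poset. -/
def IsStemIn {U : Type*} [PartialOrder U] (A : Set U) : Prop :=
  ∀ ⦃y x : U⦄, x ∈ A → y ≤ x → y ∈ A

/-- `U` realizes all one-point stem-extensions of finite stems of `U`:
whenever `A` is a finite stem of `U` and `B` is a finite poset containing (an
isomorphic copy of) `A` as a stem with `|B| = |A| + 1`, there is a
stem-embedding `g : B → U` fixing `A` pointwise. -/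
def RealizesOnePointExt (U : Type*) [PartialOrder U] : Prop :=
  ∀ (A : Set U), A.Finite → IsStemIn A →
    ∀ (B : Type) (_ : PartialOrder B) (f : A ↪o B),
      (∀ (b : B) (a : A), b ≤ f a → ∃ a' : A, f a' = b) →
      Nat.card B = A.ncard + 1 →
      ∃ g : B ↪o U, (∀ a : A, g (f a) = (a : U)) ∧
        ∀ (u : U) (b : B), u ≤ g b → ∃ b' : B, g b' = u


/-- The key extension property: for every finite stem `A` and every downward
closed (within `A`) subset `S`, there is a point whose past meets `A` exactly
in `S` and whose past is contained in `S ∪ {itself}`. -/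
def ExtProp (V : Type*) [PartialOrder V] : Prop :=
  ∀ A : Set V, A.Finite → IsStemIn A → ∀ S : Set V, S ⊆ A →
    (∀ a ∈ A, ∀ s ∈ S, a ≤ s → a ∈ S) →
    ∃ u : V, (∀ a ∈ A, (a ≤ u ↔ a ∈ S)) ∧ (∀ a ∈ A, ¬ u ≤ a) ∧
      (∀ v : V, v ≤ u → v = u ∨ v ∈ S)

theorem ExtProp.nonempty {V : Type*} [PartialOrder V] (h : ExtProp V) : Nonempty V := by
  obtain ⟨u, -⟩ := h ∅ Set.finite_empty (fun y x hx _ => hx.elim) ∅ le_rfl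
    (fun a _ s hs => hs.elim)
  exact ⟨u⟩

/-- A fresh `Type 0` copy of `Fin (n+1)` carrying no pre-existing order
instances. -/
def OnePt (n : ℕ) : Type := Fin (n + 1)

def onePtEquiv (n : ℕ) : OnePt n ≃ Fin (n + 1) := Equiv.refl (Fin (n + 1))

theorem extProp_of_realizes {U : Type*} [PartialOrder U] (hreal : RealizesOnePointExt U) :
    ExtProp U := by
  classical
  intro A hA hstem S hSA hSdc
  haveI : Fintype ↥A := hA.fintype
  set n := Fintype.card ↥A with hn
  letI instO : PartialOrder (Option ↥A) :=
    { le := fun x y => match x, y with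
        | some a, some b => (a : U) ≤ (b : U)
        | some a, none => (a : U) ∈ S
        | none, some _ => False
        | none, none => True
      lt := fun x y => (match x, y with
        | some a, some b => (a : U) ≤ (b : U)
        | some a, none => (a : U) ∈ S
        | none, some _ => False
        | none, none => True) ∧ ¬ (match y, x with
        | some a, some b => (a : U) ≤ (b : U)
        | some a, none => (a : U) ∈ S
        | none, some _ => False
        | none, none => True)
      lt_iff_le_not_ge := fun _ _ => Iff.rfl
      le_refl := by rintro (_ | a) <;> simp
      le_trans := by
        rintro (_ | a) (_ | b) (_ | c) hab hbc
        · trivial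
        · exact hbc.elim
        · trivial
        · exact hab.elim
        · exact hab
        · exact hbc.elim
        · exact hSdc _ a.2 _ hbc hab
        · exact le_trans hab hbc
      le_antisymm := by
        rintro (_ | a) (_ | b) hab hba
        · rfl
        · exact hab.elim
        · exact hba.elim
        · exact congrArg some (Subtype.ext (le_antisymm hab hba)) }
  letI : LE (Option ↥A) := instO.toLE
  let ε : Option ↥A ≃ OnePt n := ((Equiv.optionCongr (Fintype.equivFin ↥A)).trans
    (finSuccEquiv n).symm).trans (onePtEquiv n).symm
  letI instF : PartialOrder (OnePt n) := PartialOrder.lift ε.symm ε.symm.injective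
  have hεle : ∀ x y : Option ↥A, ε x ≤ ε y ↔ x ≤ y := by
    intro x y
    show ε.symm (ε x) ≤ ε.symm (ε y) ↔ x ≤ y
    rw [ε.symm_apply_apply, ε.symm_apply_apply]
  let f : A ↪o OnePt n :=
    { toFun := fun a => ε (some a)
      inj' := fun a b h => Option.some_injective _ (ε.injective h)
      map_rel_iff' := by
        intro a b
        show ε (some a) ≤ ε (some b) ↔ a ≤ b
        rw [hεle]
        exact Iff.rfl }
  have hf : ∀ (b : OnePt n) (a : A), b ≤ f a → ∃ a' : A, f a' = b := by
    intro b a hba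
    have hb : ε (ε.symm b) = b := ε.apply_symm_apply b
    have hba2 : ε (ε.symm b) ≤ ε (some a) := by rw [hb]; exact hba
    have hba3 := (hεle _ _).mp hba2
    rcases h' : ε.symm b with _ | a'
    · rw [h'] at hba3; exact hba3.elim
    · refine ⟨a', ?_⟩
      show ε (some a') = b
      rw [← h', hb]
  have hcard : Nat.card (OnePt n) = A.ncard + 1 := by
    rw [Nat.card_congr (onePtEquiv n), Nat.card_eq_fintype_card, Fintype.card_fin,
      ← Nat.card_coe_set_eq, Nat.card_eq_fintype_card]
  obtain ⟨g, hg1, hg2⟩ := hreal A hA hstem (OnePt n) instF f hf hcard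
  have hkey : ∀ (a : U) (ha : a ∈ A), (a ≤ g (ε none) ↔ a ∈ S) := by
    intro a ha
    constructor
    · intro hle
      have h2 : g (f ⟨a, ha⟩) ≤ g (ε none) := by rw [hg1]; exact hle
      rw [g.le_iff_le] at h2
      have h3 : ε (some ⟨a, ha⟩) ≤ ε none := h2
      exact (hεle _ _).mp h3
    · intro hS
      have h3 : f ⟨a, ha⟩ ≤ ε none := by
        show ε (some ⟨a, ha⟩) ≤ ε none
        exact (hεle _ _).mpr hS
      have h2 : g (f ⟨a, ha⟩) ≤ g (ε none) := g.monotone h3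
      rwa [hg1] at h2
  refine ⟨g (ε none), fun a ha => hkey a ha, ?_, ?_⟩
  · intro a ha h
    have h2 : g (ε none) ≤ g (f ⟨a, ha⟩) := by rw [hg1]; exact h
    rw [g.le_iff_le] at h2
    have h3 : ε none ≤ ε (some ⟨a, ha⟩) := h2
    exact (hεle _ _).mp h3
  · intro v hv
    obtain ⟨b', hb'⟩ := hg2 v (ε none) hv
    rcases h' : ε.symm b' with _ | a'
    · left
      rw [← hb', show b' = ε (ε.symm b') from (ε.apply_symm_apply b').symm, h']
    · right
      have hb'' : b' = ε (some a') := by rw [← h', ε.apply_symm_apply]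
      have hv' : v = (a' : U) := by
        rw [← hb', hb'']
        exact hg1 a'
      rw [hv']
      exact (hkey _ a'.2).mp (by rw [← hv']; exact hv)
theorem extProp_future {U : Type*} [PartialOrder U]
    (hpf : ∀ x : U, {s : U | s ≤ x}.Finite)
    (hU : ExtProp U) (z : U) : ExtProp {u : U // z < u} := by
  intro A hA hstem S hSA hSdc
  set Av : Set U := {y | y ≤ z ∨ ∃ a ∈ A, y ≤ (a : U)} with hAv
  have hAvfin : Av.Finite := by
    have hsub : Av ⊆ {s | s ≤ z} ∪ ⋃ a ∈ A, {s : U | s ≤ (a : U)} := by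
      rintro y (h | ⟨a, ha, h⟩)
      · exact Or.inl h
      · exact Or.inr (Set.mem_biUnion ha h)
    exact ((hpf z).union (Set.Finite.biUnion hA fun a _ => hpf (a : U))).subset hsub
  have hAvstem : IsStemIn Av := by
    rintro y x (h | ⟨a, ha, hxa⟩) hyx
    · exact Or.inl (hyx.trans h)
    · exact Or.inr ⟨a, ha, hyx.trans hxa⟩
  set Sv : Set U := {y | y ≤ z ∨ ∃ s ∈ S, y ≤ (s : U)} with hSv
  have hSvAv : Sv ⊆ Av := by
    rintro y (h | ⟨s, hs, hys⟩)
    · exact Or.inl h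
    · exact Or.inr ⟨s, hSA hs, hys⟩
  have hSvdc : ∀ a ∈ Av, ∀ s ∈ Sv, a ≤ s → a ∈ Sv := by
    rintro a _ s (h | ⟨t, ht, hst⟩) has
    · exact Or.inl (has.trans h)
    · exact Or.inr ⟨t, ht, has.trans hst⟩
  obtain ⟨u, h1, h2, h3⟩ := hU Av hAvfin hAvstem Sv hSvAv hSvdc
  have hzAv : z ∈ Av := Or.inl le_rfl
  have hzu : z < u := by
    refine lt_of_le_of_ne ((h1 z hzAv).2 (Or.inl le_rfl)) fun h => ?_
    exact h2 z hzAv (h ▸ le_rfl)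
  have hmemAv : ∀ a : {u : U // z < u}, a ∈ A → (a : U) ∈ Av := fun a ha =>
    Or.inr ⟨a, ha, le_rfl⟩
  refine ⟨⟨u, hzu⟩, ?_, ?_, ?_⟩
  · intro a ha
    have := h1 (a : U) (hmemAv a ha)
    constructor
    · intro hle
      rcases this.1 hle with h | ⟨s, hs, has⟩
      · exact absurd (lt_of_lt_of_le a.2 h) (lt_irrefl z)
      · exact hSdc a ha s hs has
    · intro hS
      exact this.2 (Or.inr ⟨a, hS, le_rfl⟩)
  · intro a ha h
    exact h2 (a : U) (hmemAv a ha) h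
  · intro v hv
    rcases h3 (v : U) hv with h | h
    · exact Or.inl (Subtype.ext h)
    · rcases h with h | ⟨s, hs, hvs⟩
      · exact absurd (lt_of_lt_of_le v.2 h) (lt_irrefl z)
      · have hvA : v ∈ A := hstem (hSA hs) hvs
        exact Or.inr (hSdc v hvA s hs hvs)
section BackForth

universe u v

variable {V : Type u} {W : Type v} [PartialOrder V] [PartialOrder W]

open scoped Classical

/-- A good finite partial isomorphism between stems, given by its graph. -/
def GoodGraph (p : Finset (V × W)) : Prop :=
  (∀ a ∈ p, ∀ b ∈ p, ((a : V × W).1 ≤ b.1 ↔ a.2 ≤ b.2)) ∧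
  (∀ a ∈ p, ∀ v : V, v ≤ (a : V × W).1 → ∃ c ∈ p, (c : V × W).1 = v) ∧
  (∀ a ∈ p, ∀ w : W, w ≤ (a : V × W).2 → ∃ c ∈ p, (c : V × W).2 = w)

theorem GoodGraph.empty : GoodGraph (∅ : Finset (V × W)) := by
  refine ⟨?_, ?_, ?_⟩ <;> intro a ha <;> exact absurd ha (Finset.notMem_empty a)

theorem GoodGraph.fun1 {p : Finset (V × W)} (hp : GoodGraph p)
    {a b : V × W} (ha : a ∈ p) (hb : b ∈ p) (h : a.1 = b.1) : a = b := by
  have h1 : a.2 ≤ b.2 := (hp.1 a ha b hb).1 (le_of_eq h)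
  have h2 : b.2 ≤ a.2 := (hp.1 b hb a ha).1 (le_of_eq h.symm)
  exact Prod.ext h (le_antisymm h1 h2)

theorem GoodGraph.fun2 {p : Finset (V × W)} (hp : GoodGraph p)
    {a b : V × W} (ha : a ∈ p) (hb : b ∈ p) (h : a.2 = b.2) : a = b := by
  have h1 : a.1 ≤ b.1 := (hp.1 a ha b hb).2 (le_of_eq h)
  have h2 : b.1 ≤ a.1 := (hp.1 b hb a ha).2 (le_of_eq h.symm)
  exact Prod.ext (le_antisymm h1 h2) h

theorem GoodGraph.swap {p : Finset (V × W)} (hp : GoodGraph p) :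
    GoodGraph (p.image Prod.swap) := by
  classical
  have hmem : ∀ c : W × V, c ∈ p.image Prod.swap ↔ c.swap ∈ p := by
    intro c
    simp only [Finset.mem_image]
    constructor
    · rintro ⟨d, hd, rfl⟩; simpa using hd
    · intro h; exact ⟨c.swap, h, by simp⟩
  refine ⟨?_, ?_, ?_⟩
  · intro a ha b hb
    exact ((hp.1 a.swap ((hmem a).1 ha) b.swap ((hmem b).1 hb)).symm)
  · intro a ha w hw
    obtain ⟨c, hc, hc2⟩ := hp.2.2 a.swap ((hmem a).1 ha) w hw
    exact ⟨c.swap, (hmem c.swap).2 (by simpa using hc), hc2⟩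
  · intro a ha v hv
    obtain ⟨c, hc, hc1⟩ := hp.2.1 a.swap ((hmem a).1 ha) v hv
    exact ⟨c.swap, (hmem c.swap).2 (by simpa using hc), hc1⟩

theorem GoodGraph.step (hW : ExtProp W) {p : Finset (V × W)} (hp : GoodGraph p) (x : V)
    (hx1 : ∀ y : V, y ≤ x → y = x ∨ ∃ c ∈ p, (c : V × W).1 = y)
    (hx2 : ∀ c ∈ p, (c : V × W).1 ≠ x) :
    ∃ w : W, GoodGraph (insert (x, w) p) := by
  classical
  set AW : Set W := ↑(p.image Prod.snd) with hAW
  have hmemAW : ∀ w : W, w ∈ AW ↔ ∃ c ∈ p, (c : V × W).2 = w := by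
    intro w; simp [hAW]
  have hAWfin : AW.Finite := (p.image Prod.snd).finite_toSet
  have hAWstem : IsStemIn AW := by
    intro y b hb hyb
    obtain ⟨c, hc, rfl⟩ := (hmemAW b).1 hb
    exact (hmemAW y).2 (hp.2.2 c hc y hyb)
  set SW : Set W := ↑((p.filter fun c => c.1 ≤ x).image Prod.snd) with hSW
  have hmemSW : ∀ w : W, w ∈ SW ↔ ∃ c ∈ p, (c : V × W).1 ≤ x ∧ (c : V × W).2 = w := by
    intro w
    simp only [hSW, Finset.coe_image, Set.mem_image, Finset.mem_coe, Finset.mem_filter]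
    constructor
    · rintro ⟨c, ⟨hc, hcx⟩, rfl⟩; exact ⟨c, hc, hcx, rfl⟩
    · rintro ⟨c, hc, hcx, rfl⟩; exact ⟨c, ⟨hc, hcx⟩, rfl⟩
  have hSWsub : SW ⊆ AW := by
    intro w hw
    obtain ⟨c, hc, -, hc2⟩ := (hmemSW w).1 hw
    exact (hmemAW w).2 ⟨c, hc, hc2⟩
  have hSWdc : ∀ a ∈ AW, ∀ s ∈ SW, a ≤ s → a ∈ SW := by
    intro a ha s hs has
    obtain ⟨c, hc, rfl⟩ := (hmemAW a).1 ha
    obtain ⟨d, hd, hdx, rfl⟩ := (hmemSW s).1 hs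
    have : c.1 ≤ d.1 := (hp.1 c hc d hd).2 has
    exact (hmemSW c.2).2 ⟨c, hc, this.trans hdx, rfl⟩
  obtain ⟨w, hw1, hw2, hw3⟩ := hW AW hAWfin hAWstem SW hSWsub hSWdc
  refine ⟨w, ?_, ?_, ?_⟩
  · intro a ha b hb
    rcases Finset.mem_insert.1 ha with rfl | ha <;>
      rcases Finset.mem_insert.1 hb with rfl | hb
    · simp
    · constructor
      · intro h
        obtain ⟨c, hc, hc1⟩ := hp.2.1 b hb x h
        exact absurd hc1 (hx2 c hc)
      · intro h
        exact absurd h (hw2 b.2 ((hmemAW b.2).2 ⟨b, hb, rfl⟩))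
    · show a.1 ≤ x ↔ a.2 ≤ w
      rw [hw1 a.2 ((hmemAW a.2).2 ⟨a, ha, rfl⟩), hmemSW]
      constructor
      · intro h; exact ⟨a, ha, h, rfl⟩
      · rintro ⟨c, hc, hcx, hc2⟩
        have : c = a := hp.fun2 hc ha hc2
        exact this ▸ hcx
    · exact hp.1 a ha b hb
  · intro a ha v hv
    rcases Finset.mem_insert.1 ha with rfl | ha
    · rcases hx1 v hv with rfl | ⟨c, hc, hc1⟩
      · exact ⟨(v, w), Finset.mem_insert_self _ _, rfl⟩
      · exact ⟨c, Finset.mem_insert_of_mem hc, hc1⟩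
    · obtain ⟨c, hc, hc1⟩ := hp.2.1 a ha v hv
      exact ⟨c, Finset.mem_insert_of_mem hc, hc1⟩
  · intro a ha u hu
    rcases Finset.mem_insert.1 ha with rfl | ha
    · rcases hw3 u hu with rfl | hS
      · exact ⟨(x, u), Finset.mem_insert_self _ _, rfl⟩
      · obtain ⟨c, hc, -, hc2⟩ := (hmemSW u).1 hS
        exact ⟨c, Finset.mem_insert_of_mem hc, hc2⟩
    · obtain ⟨c, hc, hc2⟩ := hp.2.2 a ha u hu
      exact ⟨c, Finset.mem_insert_of_mem hc, hc2⟩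

theorem GoodGraph.forth (hpfV : ∀ x : V, {s : V | s ≤ x}.Finite) (hW : ExtProp W) :
    ∀ (p : Finset (V × W)), GoodGraph p → ∀ x : V,
      ∃ q, GoodGraph q ∧ p ⊆ q ∧ ∃ c ∈ q, (c : V × W).1 = x := by
  classical
  suffices H : ∀ (n : ℕ) (p : Finset (V × W)), GoodGraph p → ∀ x : V,
      ((hpfV x).toFinset.filter fun y => ∀ c ∈ p, (c : V × W).1 ≠ y).card ≤ n →
      ∃ q, GoodGraph q ∧ p ⊆ q ∧ ∃ c ∈ q, (c : V × W).1 = x by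
    intro p hp x
    exact H _ p hp x le_rfl
  intro n
  induction n with
  | zero =>
    intro p hp x hcard
    have hT : ((hpfV x).toFinset.filter fun y => ∀ c ∈ p, (c : V × W).1 ≠ y) = ∅ :=
      Finset.card_eq_zero.1 (Nat.le_zero.1 hcard)
    by_cases hx : ∃ c ∈ p, (c : V × W).1 = x
    · exact ⟨p, hp, Finset.Subset.refl p, hx⟩
    · exfalso
      have : x ∈ ((hpfV x).toFinset.filter fun y => ∀ c ∈ p, (c : V × W).1 ≠ y) := by
        rw [Finset.mem_filter, Set.Finite.mem_toFinset]
        push_neg at hx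
        exact ⟨le_rfl, hx⟩
      rw [hT] at this
      exact Finset.notMem_empty x this
  | succ n ih =>
    intro p hp x hcard
    by_cases hx : ∃ c ∈ p, (c : V × W).1 = x
    · exact ⟨p, hp, Finset.Subset.refl p, hx⟩
    · set T := ((hpfV x).toFinset.filter fun y => ∀ c ∈ p, (c : V × W).1 ≠ y) with hTdef
      have hxT : x ∈ T := by
        rw [hTdef, Finset.mem_filter, Set.Finite.mem_toFinset]
        push_neg at hx
        exact ⟨le_rfl, hx⟩
      obtain ⟨m, hmT, hmin⟩ := T.exists_minimal ⟨x, hxT⟩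
      have hmx : m ≤ x := by
        have := (Finset.mem_filter.1 hmT).1
        rwa [Set.Finite.mem_toFinset] at this
      have hmnew : ∀ c ∈ p, (c : V × W).1 ≠ m := (Finset.mem_filter.1 hmT).2
      have hm1 : ∀ y : V, y ≤ m → y = m ∨ ∃ c ∈ p, (c : V × W).1 = y := by
        intro y hym
        by_cases hcy : ∃ c ∈ p, (c : V × W).1 = y
        · exact Or.inr hcy
        · left
          have hyT : y ∈ T := by
            rw [hTdef, Finset.mem_filter, Set.Finite.mem_toFinset]
            push_neg at hcy
            exact ⟨hym.trans hmx, hcy⟩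
          by_contra hne
          exact hne (le_antisymm hym (hmin hyT hym))
      obtain ⟨w, hq'⟩ := hp.step hW m hm1 hmnew
      have hsub : ((hpfV x).toFinset.filter
          fun y => ∀ c ∈ insert (m, w) p, (c : V × W).1 ≠ y) ⊆ T.erase m := by
        intro y hy
        rw [Finset.mem_filter] at hy
        rw [Finset.mem_erase]
        refine ⟨fun h => hy.2 (m, w) (Finset.mem_insert_self _ _) h.symm, ?_⟩
        rw [hTdef, Finset.mem_filter]
        exact ⟨hy.1, fun c hc => hy.2 c (Finset.mem_insert_of_mem hc)⟩
      have hcard' : ((hpfV x).toFinset.filter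
          fun y => ∀ c ∈ insert (m, w) p, (c : V × W).1 ≠ y).card ≤ n := by
        have h1 := Finset.card_le_card hsub
        rw [Finset.card_erase_of_mem hmT] at h1
        omega
      obtain ⟨q, hq, hsub', hc⟩ := ih (insert (m, w) p) hq' x hcard'
      exact ⟨q, hq, (Finset.subset_insert _ _).trans hsub', hc⟩

theorem GoodGraph.back (hpfW : ∀ y : W, {s : W | s ≤ y}.Finite) (hV : ExtProp V)
    {p : Finset (V × W)} (hp : GoodGraph p) (y : W) :
    ∃ q, GoodGraph q ∧ p ⊆ q ∧ ∃ c ∈ q, (c : V × W).2 = y := by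
  classical
  obtain ⟨q', hq', hsub, c, hc, hc1⟩ := GoodGraph.forth hpfW hV (p.image Prod.swap) hp.swap y
  refine ⟨q'.image Prod.swap, hq'.swap, ?_, ⟨c.swap, Finset.mem_image_of_mem _ hc, hc1⟩⟩
  intro a ha
  have h1 : a.swap ∈ q' := hsub (Finset.mem_image_of_mem _ ha)
  have h2 : a.swap.swap ∈ q'.image Prod.swap := Finset.mem_image_of_mem _ h1
  simpa using h2

end BackForth

theorem iso_of_extProp {V : Type u} {W : Type v} [PartialOrder V] [PartialOrder W]
    [Countable V] [Countable W]
    (hpfV : ∀ x : V, {s : V | s ≤ x}.Finite) (hpfW : ∀ y : W, {s : W | s ≤ y}.Finite)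
    (hV : ExtProp V) (hW : ExtProp W) : Nonempty (V ≃o W) := by
  classical
  haveI : Nonempty V := hV.nonempty
  haveI : Nonempty W := hW.nonempty
  obtain ⟨eV, heV⟩ := exists_surjective_nat V
  obtain ⟨eW, heW⟩ := exists_surjective_nat W
  have step2 : ∀ p : Finset (V × W), GoodGraph p → ∀ n : ℕ,
      ∃ q, GoodGraph q ∧ p ⊆ q ∧ (∃ c ∈ q, (c : V × W).1 = eV n) ∧
        (∃ c ∈ q, (c : V × W).2 = eW n) := by
    intro p hp n
    obtain ⟨q1, hq1, hsub1, hc1⟩ := GoodGraph.forth hpfV hW p hp (eV n)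
    obtain ⟨q2, hq2, hsub2, hc2⟩ := hq1.back hpfW hV (eW n)
    obtain ⟨c, hc, hc'⟩ := hc1
    exact ⟨q2, hq2, hsub1.trans hsub2, ⟨c, hsub2 hc, hc'⟩, hc2⟩
  let P : ℕ → {p : Finset (V × W) // GoodGraph p} := fun n =>
    Nat.rec ⟨∅, GoodGraph.empty⟩
      (fun n prev => ⟨(step2 prev.1 prev.2 n).choose, (step2 prev.1 prev.2 n).choose_spec.1⟩) n
  have hPsucc : ∀ n : ℕ, (P n).1 ⊆ (P (n + 1)).1 ∧
      (∃ c ∈ (P (n + 1)).1, (c : V × W).1 = eV n) ∧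
      (∃ c ∈ (P (n + 1)).1, (c : V × W).2 = eW n) := by
    intro n
    exact ⟨(step2 (P n).1 (P n).2 n).choose_spec.2.1,
      (step2 (P n).1 (P n).2 n).choose_spec.2.2.1,
      (step2 (P n).1 (P n).2 n).choose_spec.2.2.2⟩
  have hmono : ∀ m n : ℕ, m ≤ n → (P m).1 ⊆ (P n).1 := by
    intro m n h
    induction h with
    | refl => exact Finset.Subset.refl _
    | step h ih => exact ih.trans (hPsucc _).1
  set r : V → W → Prop := fun v w => ∃ n, (v, w) ∈ (P n).1 with hr
  have hpair : ∀ {v w v' w'}, r v w → r v' w' →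
      ∃ N, (v, w) ∈ (P N).1 ∧ (v', w') ∈ (P N).1 := by
    rintro v w v' w' ⟨n, hn⟩ ⟨m, hm⟩
    exact ⟨max n m, hmono n _ (le_max_left n m) hn, hmono m _ (le_max_right n m) hm⟩
  have hiso : ∀ {v w v' w'}, r v w → r v' w' → (v ≤ v' ↔ w ≤ w') := by
    intro v w v' w' h h'
    obtain ⟨N, h1, h2⟩ := hpair h h'
    exact (P N).2.1 _ h1 _ h2
  have hfunW : ∀ {v v' w}, r v w → r v' w → v = v' := by
    intro v v' w h h'
    obtain ⟨N, h1, h2⟩ := hpair h h'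
    have := (P N).2.fun2 h1 h2 rfl
    exact congrArg Prod.fst this
  have hfunV : ∀ {v w w'}, r v w → r v w' → w = w' := by
    intro v w w' h h'
    obtain ⟨N, h1, h2⟩ := hpair h h'
    have := (P N).2.fun1 h1 h2 rfl
    exact congrArg Prod.snd this
  have htotV : ∀ v : V, ∃ w : W, r v w := by
    intro v
    obtain ⟨k, rfl⟩ := heV v
    obtain ⟨c, hc, hc1⟩ := (hPsucc k).2.1
    refine ⟨c.2, k + 1, ?_⟩
    rwa [← hc1, Prod.mk.eta]
  have htotW : ∀ w : W, ∃ v : V, r v w := by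
    intro w
    obtain ⟨k, rfl⟩ := heW w
    obtain ⟨c, hc, hc2⟩ := (hPsucc k).2.2
    refine ⟨c.1, k + 1, ?_⟩
    rwa [← hc2, Prod.mk.eta]
  let F : V → W := fun v => (htotV v).choose
  have hF : ∀ v, r v (F v) := fun v => (htotV v).choose_spec
  let G : W → V := fun w => (htotW w).choose
  have hG : ∀ w, r (G w) w := fun w => (htotW w).choose_spec
  let Feqv : V ≃ W := ⟨F, G, fun v => hfunW (hG (F v)) (hF v),
    fun w => hfunV (hF (G w)) (hG w)⟩
  exact ⟨⟨Feqv, fun {a b} => (hiso (hF a) (hF b)).symm⟩⟩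

/-- In the universal homogeneous countable past-finite causal set,
the proper future of any point is order-isomorphic to the whole causal set. -/
theorem stmt_17 {U : Type*} [PartialOrder U] [Countable U]
    (hpf : ∀ x : U, {s : U | s ≤ x}.Finite)
    (hreal : RealizesOnePointExt U) (z : U) :
    Nonempty ({u : U // z < u} ≃o U) := by
  have hU : ExtProp U := extProp_of_realizes hreal
  have hF : ExtProp {u : U // z < u} := extProp_future hpf hU z
  have hpfF : ∀ x : {u : U // z < u}, {s : {u : U // z < u} | s ≤ x}.Finite := by
    intro x
    have : {s : {u : U // z < u} | s ≤ x} ⊆ Subtype.val ⁻¹' {s : U | s ≤ (x : U)} :=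
      fun s hs => hs
    exact (Set.Finite.preimage Subtype.val_injective.injOn (hpf (x : U))).subset this
  exact iso_of_extProp hpfF hpf hF hU
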